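/- For the functions τ(t) = -log(t + e^{-t} - 1) and ρ(t) = τ(t) + log(1 - e^{-t}) on (0,∞), the quotient ρ'(t)²/τ''(t) tends to 1 as t → ∞. -/

import Mathlib

open Real Filter

private lemma g_pos {t : ℝ} (ht : 0 < t) : 0 < t + Real.exp (-t) - 1 := by
  have h := Real.add_one_lt_exp (x := -t) (by linarith)
  linarith

private lemma exp_lt_one' {t : ℝ} (ht : 0 < t) : Real.exp (-t) < 1 := by
  rw [Real.exp_lt_one_iff]; linarith

private lemma hasDerivAt_g (t : ℝ) :
    HasDerivAt (fun s : ℝ => s + Real.exp (-s) - 1) (1 - Real.exp (-t)) t := by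
  have h1 : HasDerivAt (fun s : ℝ => Real.exp (-s)) (-Real.exp (-t)) t := by
    simpa [Function.comp_def] using (Real.hasDerivAt_exp (-t)).comp t ((hasDerivAt_id t).neg)
  simpa [sub_eq_add_neg] using ((hasDerivAt_id t).add h1).sub_const 1

private lemma hasDerivAt_n (t : ℝ) :
    HasDerivAt (fun s : ℝ => 1 - Real.exp (-s)) (Real.exp (-t)) t := by
  have h1 : HasDerivAt (fun s : ℝ => Real.exp (-s)) (-Real.exp (-t)) t := by
    simpa [Function.comp_def] using (Real.hasDerivAt_exp (-t)).comp t ((hasDerivAt_id t).neg)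
  simpa [Pi.sub_def] using (hasDerivAt_const t (1:ℝ)).sub h1

private lemma hasDerivAt_tau (τ : ℝ → ℝ)
    (hτ : ∀ t, τ t = -Real.log (t + Real.exp (-t) - 1))
    {t : ℝ} (ht : 0 < t) :
    HasDerivAt τ (-((1 - Real.exp (-t)) / (t + Real.exp (-t) - 1))) t := by
  have h : HasDerivAt (fun s : ℝ => -Real.log (s + Real.exp (-s) - 1))
      (-((1 - Real.exp (-t)) / (t + Real.exp (-t) - 1))) t :=
    ((hasDerivAt_g t).log (g_pos ht).ne').neg
  exact h.congr_of_eventuallyEq (Filter.Eventually.of_forall fun s => (hτ s))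

private lemma hasDerivAt_F {t : ℝ} (ht : 0 < t) :
    HasDerivAt (fun s : ℝ => -((1 - Real.exp (-s)) / (s + Real.exp (-s) - 1)))
      (((1 - Real.exp (-t)) ^ 2 - Real.exp (-t) * (t + Real.exp (-t) - 1)) /
        (t + Real.exp (-t) - 1) ^ 2) t := by
  have h := ((hasDerivAt_n t).div (hasDerivAt_g t) (g_pos ht).ne').neg
  exact h.congr_deriv (by ring)

private lemma deriv_deriv_tau (τ : ℝ → ℝ)
    (hτ : ∀ t, τ t = -Real.log (t + Real.exp (-t) - 1))
    {t : ℝ} (ht : 0 < t) :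
    deriv (deriv τ) t =
      ((1 - Real.exp (-t)) ^ 2 - Real.exp (-t) * (t + Real.exp (-t) - 1)) /
        (t + Real.exp (-t) - 1) ^ 2 := by
  have hev : deriv τ =ᶠ[nhds t]
      (fun s : ℝ => -((1 - Real.exp (-s)) / (s + Real.exp (-s) - 1))) := by
    filter_upwards [Ioi_mem_nhds ht] with s hs
    exact (hasDerivAt_tau τ hτ hs).deriv
  rw [hev.deriv_eq]
  exact (hasDerivAt_F ht).deriv

private lemma deriv_rho (τ ρ : ℝ → ℝ)
    (hτ : ∀ t, τ t = -Real.log (t + Real.exp (-t) - 1))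
    (hρ : ∀ t, ρ t = τ t + Real.log (1 - Real.exp (-t)))
    {t : ℝ} (ht : 0 < t) :
    deriv ρ t = -((1 - Real.exp (-t)) / (t + Real.exp (-t) - 1)) +
      Real.exp (-t) / (1 - Real.exp (-t)) := by
  have hlog : HasDerivAt (fun s : ℝ => Real.log (1 - Real.exp (-s)))
      (Real.exp (-t) / (1 - Real.exp (-t))) t :=
    (hasDerivAt_n t).log (by have := exp_lt_one' ht; linarith)
  have h := (hasDerivAt_tau τ hτ ht).add hlog
  exact (h.congr_of_eventuallyEq (Filter.Eventually.of_forall fun s => (hρ s))).deriv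

/-- For τ(t) = -log(t + e^{-t} - 1) and ρ(t) = τ(t) + log(1 - e^{-t}) on (0,∞),
the quotient ρ'(t)²/τ''(t) tends to 1 as t → ∞. -/
theorem tau_rho_quotient_tendsto_one
    (τ ρ : ℝ → ℝ)
    (hτ : ∀ t, τ t = -Real.log (t + Real.exp (-t) - 1))
    (hρ : ∀ t, ρ t = τ t + Real.log (1 - Real.exp (-t))) :
    Filter.Tendsto (fun t => (deriv ρ t) ^ 2 / (deriv (deriv τ) t))
      Filter.atTop (nhds 1) := by
  have hu : Tendsto (fun t : ℝ => Real.exp (-t)) atTop (nhds 0) :=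
    Real.tendsto_exp_neg_atTop_nhds_zero
  have hug : Tendsto (fun t : ℝ => Real.exp (-t) * (t + Real.exp (-t) - 1))
      atTop (nhds 0) := by
    have h1 : Tendsto (fun t : ℝ => t * Real.exp (-t)) atTop (nhds 0) := by
      simpa using Real.tendsto_pow_mul_exp_neg_atTop_nhds_zero 1
    have h2 := (h1.add (hu.mul hu)).sub hu
    norm_num at h2
    exact h2.congr (fun t => by ring)
  have h1u : Tendsto (fun t : ℝ => 1 - Real.exp (-t)) atTop (nhds 1) := by
    simpa using (tendsto_const_nhds : Tendsto (fun _ : ℝ => (1:ℝ)) atTop _).sub hu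
  have hD : Tendsto (fun t : ℝ => (1 - Real.exp (-t)) ^ 2 -
      Real.exp (-t) * (t + Real.exp (-t) - 1)) atTop (nhds 1) := by
    simpa using (h1u.pow 2).sub hug
  have hN : Tendsto (fun t : ℝ => ((1 - Real.exp (-t)) -
      Real.exp (-t) * (t + Real.exp (-t) - 1) / (1 - Real.exp (-t))) ^ 2)
      atTop (nhds 1) := by
    simpa using (h1u.sub (hug.div h1u one_ne_zero)).pow 2
  have hR := hN.div hD one_ne_zero
  rw [div_one] at hR
  refine hR.congr' ?_
  filter_upwards [eventually_gt_atTop (0:ℝ),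
    hD.eventually (eventually_gt_nhds zero_lt_one)] with t ht hDt
  rw [Pi.div_apply, deriv_rho τ ρ hτ hρ ht, deriv_deriv_tau τ hτ ht]
  have hg := (g_pos ht).ne'
  have h1 : (1 : ℝ) - Real.exp (-t) ≠ 0 := by have := exp_lt_one' ht; linarith
  have hD' := hDt.ne'
  field_simp
  ring
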